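/- Lemma (persistence pair preservation under perturbation; the paper's Fact 3.16). Let r be an order with levels on X and let (τ₀, ω₀) be a persistence pair of r. Denote by ω_e the n-cell having τ₀ as a face that lies in K_V(G(≻_r τ₀), ω₀), by ω_e′ the other n-cell having τ₀ as a face, and by ω₁ the ≼_r-maximum n-cell of K_V(G(≻_r τ₀), ω_e′). Let P be any path from ω₀ to ω_e in the graph G(≻_r τ₀), let η > 0, let A ⊆ X^(n−1) be the union of the set of edges of P, the singleton {τ₀}, and the set of (n−1)-simplices that are edges of the connected component of ω₁ in G(≻_r τ₀), and let q = q(r, η, A). Then (τ₀, ω₀) is a persistence pair of q; i.e., τ_{q,ω₀} = τ₀. -/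

import Mathlib

open scoped Classical

namespace StableVol

/-- A finite abstract simplicial complex of dimension `n`: a finite family of nonempty
finite subsets of the vertex set, closed under nonempty subsets, in which every element
is contained in an element of cardinality `n+1`. -/
structure NComplex (V : Type*) [DecidableEq V] (n : ℕ) where
  X : Finset (Finset V)
  nonempty_mem : ∀ σ ∈ X, σ.Nonempty
  down_closed : ∀ σ ∈ X, ∀ σ' : Finset V, σ' ⊆ σ → σ'.Nonempty → σ' ∈ X
  contained_top : ∀ σ ∈ X, ∃ ω ∈ X, σ ⊆ ω ∧ ω.card = n + 1

variable {V : Type*} [DecidableEq V] {n : ℕ}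

/-- An `n`-cell is either an `n`-simplex (`some ω`) or the formal cell `ω∞` (`none`). -/
abbrev Cell (V : Type*) := Option (Finset V)

/-- `τ` is a face of the cell `c`.  For `c = some ω` this means that `ω` is an
`n`-simplex of `X` containing `τ`; the faces of `ω∞ = none` are the `(n-1)`-simplices
having exactly one `n`-simplex coface. -/
def faceCell (C : NComplex V n) (τ : Finset V) : Cell V → Prop
  | some ω => ω ∈ C.X ∧ ω.card = n + 1 ∧ τ ⊆ ω
  | none => {ω | ω ∈ C.X ∧ ω.card = n + 1 ∧ τ ⊆ ω}.ncard = 1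

def IsCell (C : NComplex V n) : Cell V → Prop
  | some ω => ω ∈ C.X ∧ ω.card = n + 1
  | none => True

/-- Adjacency in the dual graph, restricted to the edge set `E ⊆ X^(n-1)`. -/
def adj (C : NComplex V n) (E : Set (Finset V)) (c c' : Cell V) : Prop :=
  ∃ τ ∈ E, faceCell C τ c ∧ faceCell C τ c' ∧ c ≠ c'

/-- `KV C E c₀`: the set of `n`-cells in the connected component of `c₀` in the
subgraph of the dual graph with edge set `E`. -/
def KV (C : NComplex V n) (E : Set (Finset V)) (c₀ : Cell V) : Set (Cell V) :=
  {c | Relation.ReflTransGen (adj C E) c₀ c}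

/-- Every `(n-1)`-simplex of `X` is a face of exactly two `n`-cells. -/
def TwoCofaces (C : NComplex V n) : Prop :=
  ∀ τ ∈ C.X, τ.card = n →
    ∃ c₁ c₂ : Cell V, c₁ ≠ c₂ ∧ ∀ c : Cell V, faceCell C τ c ↔ (c = c₁ ∨ c = c₂)

/-- The dual graph (with full edge set `X^(n-1)`) is connected. -/
def DualConn (C : NComplex V n) : Prop :=
  ∀ c c' : Cell V, IsCell C c → IsCell C c' →
    c' ∈ KV C {τ | τ ∈ C.X ∧ τ.card = n} c

/-- A level function: monotone with respect to strict inclusion of simplices. -/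
def IsLevelFun (C : NComplex V n) (lev : Finset V → ℝ) : Prop :=
  ∀ σ ∈ C.X, ∀ σ' ∈ C.X, σ ⊂ σ' → lev σ ≤ lev σ'

/-- `(lev, slt)` is an order with levels on `X`: `lev` is a level function and `slt`
is (the strict form of) a linear order on `X` refining both `lev` and strict
inclusion. -/
def IsOWL (C : NComplex V n) (lev : Finset V → ℝ)
    (slt : Finset V → Finset V → Prop) : Prop :=
  IsLevelFun C lev ∧
  (∀ σ ∈ C.X, ¬ slt σ σ) ∧
  (∀ σ ∈ C.X, ∀ σ' ∈ C.X, ∀ σ'' ∈ C.X, slt σ σ' → slt σ' σ'' → slt σ σ'') ∧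
  (∀ σ ∈ C.X, ∀ σ' ∈ C.X, σ ≠ σ' → slt σ σ' ∨ slt σ' σ) ∧
  (∀ σ ∈ C.X, ∀ σ' ∈ C.X, slt σ σ' → lev σ ≤ lev σ') ∧
  (∀ σ ∈ C.X, ∀ σ' ∈ C.X, σ ⊂ σ' → slt σ σ')

/-- Extension of a strict order on simplices to `n`-cells, `ω∞ = none` being the
unique maximum. -/
def cslt (slt : Finset V → Finset V → Prop) : Cell V → Cell V → Prop
  | some σ, some σ' => slt σ σ'
  | some _, none => True
  | none, _ => False

/-- `m` is the maximum cell of the set `S` with respect to the order `slt`. -/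
def IsMaxCell (slt : Finset V → Finset V → Prop) (S : Set (Cell V)) (m : Cell V) :
    Prop :=
  m ∈ S ∧ ∀ c ∈ S, c ≠ m → cslt slt c m

/-- Edge set of `G(≻ σ₀)`: the `(n-1)`-simplices strictly above `σ₀`. -/
def Egt (C : NComplex V n) (slt : Finset V → Finset V → Prop) (σ₀ : Finset V) :
    Set (Finset V) :=
  {τ | τ ∈ C.X ∧ τ.card = n ∧ slt σ₀ τ}

/-- Edge set of `G(⪰ σ₀)`. -/
def Ege (C : NComplex V n) (slt : Finset V → Finset V → Prop) (σ₀ : Finset V) :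
    Set (Finset V) :=
  {τ | τ ∈ C.X ∧ τ.card = n ∧ (τ = σ₀ ∨ slt σ₀ τ)}

/-- Edge set of `G(lev ≥ s)`. -/
def Elev (C : NComplex V n) (lev : Finset V → ℝ) (s : ℝ) : Set (Finset V) :=
  {τ | τ ∈ C.X ∧ τ.card = n ∧ s ≤ lev τ}

/-- `(τ₀, ω₀)` is a persistence pair of the order `slt`: the two `n`-cells having
`τ₀` as a face lie in distinct connected components of `G(≻ τ₀)`, and `ω₀` is the
smaller of the two maximum cells of these two components. -/
def IsPersPair (C : NComplex V n) (slt : Finset V → Finset V → Prop)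
    (τ₀ ω₀ : Finset V) : Prop :=
  τ₀ ∈ C.X ∧ τ₀.card = n ∧ ω₀ ∈ C.X ∧ ω₀.card = n + 1 ∧
  ∃ c₁ c₂ : Cell V, c₁ ≠ c₂ ∧ faceCell C τ₀ c₁ ∧ faceCell C τ₀ c₂ ∧
    c₂ ∉ KV C (Egt C slt τ₀) c₁ ∧
    ∃ m₂ : Cell V,
      IsMaxCell slt (KV C (Egt C slt τ₀) c₁) (some ω₀) ∧
      IsMaxCell slt (KV C (Egt C slt τ₀) c₂) m₂ ∧
      cslt slt (some ω₀) m₂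

/-- The optimal volume `OV(q, ω₀) = K_V(G(≻_q τ_{q,ω₀}), ω₀)`. -/
def OV (C : NComplex V n) (slt : Finset V → Finset V → Prop) (ω₀ : Finset V) :
    Set (Cell V) :=
  {c | ∃ τ, IsPersPair C slt τ ω₀ ∧ c ∈ KV C (Egt C slt τ) (some ω₀)}

/-- The stable volume `SV_ε(r, τ₀, ω₀) = K_V(G(r̂ ≥ r̂(τ₀) + ε), ω₀)`. -/
def SV (C : NComplex V n) (lev : Finset V → ℝ) (τ₀ ω₀ : Finset V) (ε : ℝ) :
    Set (Cell V) :=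
  KV C (Elev C lev (lev τ₀ + ε)) (some ω₀)

/-- `(qlev, qslt) ∈ R_ε`: an order with levels uniformly `ε/2`-close to `rlev`
satisfying the `(r, ω₀)`-order condition. -/
def InR (C : NComplex V n) (rlev : Finset V → ℝ)
    (rslt : Finset V → Finset V → Prop) (ω₀ : Finset V) (ε : ℝ)
    (qlev : Finset V → ℝ) (qslt : Finset V → Finset V → Prop) : Prop :=
  IsOWL C qlev qslt ∧ (∀ σ ∈ C.X, |qlev σ - rlev σ| < ε / 2) ∧
  (∀ σ ∈ C.X, rslt σ ω₀ → qslt σ ω₀)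

/-- `F_{ε,n}`: the `n`-simplices with level at least `lev τ₀ + ε` that precede `ω₀`. -/
def Fcells (C : NComplex V n) (lev : Finset V → ℝ)
    (slt : Finset V → Finset V → Prop) (τ₀ ω₀ : Finset V) (ε : ℝ) :
    Set (Finset V) :=
  {σ | σ ∈ C.X ∧ σ.card = n + 1 ∧ lev τ₀ + ε ≤ lev σ ∧ slt σ ω₀}

/-- `F_{ε,n-1}`: the `(n-1)`-simplices with level at least `lev τ₀ + ε` that
precede `ω₀`. -/
def Fedges (C : NComplex V n) (lev : Finset V → ℝ)
    (slt : Finset V → Finset V → Prop) (τ₀ ω₀ : Finset V) (ε : ℝ) :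
    Set (Finset V) :=
  {σ | σ ∈ C.X ∧ σ.card = n ∧ lev τ₀ + ε ≤ lev σ ∧ slt σ ω₀}

/-- `τ*(∂z)`: the `ℤ/2ℤ`-sum of the coefficients of `z` over the `n`-simplex
cofaces of `τ`. -/
def bsum (C : NComplex V n) (τ : Finset V) (z : Finset V → ZMod 2) : ZMod 2 :=
  ∑ ω ∈ C.X.filter (fun ω => ω.card = n + 1 ∧ τ ⊆ ω), z ω

/-- A feasible chain `z = ω₀ + Σ_{ω ∈ F_{ε,n}} α_ω ω` with `τ*(∂z) = 0` for all
`τ ∈ F_{ε,n-1}`. -/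
def IsFeasible (C : NComplex V n) (lev : Finset V → ℝ)
    (slt : Finset V → Finset V → Prop) (τ₀ ω₀ : Finset V) (ε : ℝ)
    (z : Finset V → ZMod 2) : Prop :=
  z ω₀ = 1 ∧
  (∀ ω : Finset V, ω ≠ ω₀ → ω ∉ Fcells C lev slt τ₀ ω₀ ε → z ω = 0) ∧
  (∀ τ ∈ Fedges C lev slt τ₀ ω₀ ε, bsum C τ z = 0)

/-- `‖z‖₀`: the number of simplices of `X` with nonzero coefficient in `z`. -/
def norm0 (C : NComplex V n) (z : Finset V → ZMod 2) : ℕ :=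
  (C.X.filter fun ω => z ω ≠ 0).card

/-- The level function of the perturbed order `q(r, η, A)`. -/
noncomputable def pertLev (C : NComplex V n) (rlev : Finset V → ℝ) (η : ℝ)
    (A : Set (Finset V)) : Finset V → ℝ :=
  fun σ => if (σ ∈ C.X ∧ σ.card = n + 1) ∨ σ ∈ A then rlev σ + η else rlev σ - η

/-- The strict order of the perturbed order `q(r, η, A)`. -/
def pertSlt (C : NComplex V n) (rlev : Finset V → ℝ)
    (rslt : Finset V → Finset V → Prop) (η : ℝ) (A : Set (Finset V)) :
    Finset V → Finset V → Prop :=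
  fun σ σ' => pertLev C rlev η A σ < pertLev C rlev η A σ' ∨
    (pertLev C rlev η A σ = pertLev C rlev η A σ' ∧ rslt σ σ')

/-- The `(n-1)`-simplices that are edges of the connected component of `c₀` in the
subgraph with edge set `E`. -/
def compEdges (C : NComplex V n) (E : Set (Finset V)) (c₀ : Cell V) :
    Set (Finset V) :=
  {τ | τ ∈ E ∧ ∃ c, faceCell C τ c ∧ c ∈ KV C E c₀}

/-- `IsPath C E c c' vs es`: `vs` is the vertex list and `es` the edge list of a walk
from `c` to `c'` in the subgraph of the dual graph with edge set `E`. -/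
inductive IsPath (C : NComplex V n) (E : Set (Finset V)) :
    Cell V → Cell V → List (Cell V) → List (Finset V) → Prop
  | nil (c : Cell V) : IsPath C E c c [c] []
  | cons {c c' c'' : Cell V} {vs : List (Cell V)} {es : List (Finset V)}
      {τ : Finset V} : τ ∈ E → faceCell C τ c → faceCell C τ c' → c ≠ c' →
      IsPath C E c' c'' vs es → IsPath C E c c'' (c :: vs) (τ :: es)


/-! ### Auxiliary lemmas -/

section Aux

variable {C : NComplex V n} {E E' : Set (Finset V)} {c c' d : Cell V}

lemma faceCell_some_iff {τ ω : Finset V} :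
    faceCell C τ (some ω) ↔ (ω ∈ C.X ∧ ω.card = n + 1 ∧ τ ⊆ ω) := Iff.rfl

lemma cslt_some_some {slt : Finset V → Finset V → Prop} {a b : Finset V} :
    cslt slt (some a) (some b) ↔ slt a b := Iff.rfl

lemma cslt_none_iff {slt : Finset V → Finset V → Prop} {c : Cell V} :
    cslt slt none c ↔ False := Iff.rfl

lemma cslt_some_none {slt : Finset V → Finset V → Prop} {a : Finset V} :
    cslt slt (some a) none ↔ True := Iff.rfl

lemma adj_symm (h : adj C E c c') : adj C E c' c := by
  obtain ⟨τ, hτ, h1, h2, h3⟩ := h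
  exact ⟨τ, hτ, h2, h1, h3.symm⟩

lemma mem_KV_self : c ∈ KV C E c := Relation.ReflTransGen.refl

lemma mem_KV_symm (h : c' ∈ KV C E c) : c ∈ KV C E c' :=
  (@Relation.ReflTransGen.stdSymm _ (adj C E) ⟨fun _ _ hh => adj_symm hh⟩).symm _ _ h

lemma mem_KV_trans {b : Cell V} (h1 : b ∈ KV C E c) (h2 : d ∈ KV C E b) :
    d ∈ KV C E c := Relation.ReflTransGen.trans h1 h2

lemma KV_eq_of_mem (h : c' ∈ KV C E c) : KV C E c' = KV C E c := by
  ext d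
  constructor
  · exact fun hd => Relation.ReflTransGen.trans h hd
  · exact fun hd => Relation.ReflTransGen.trans (mem_KV_symm h) hd

lemma KV_mono (hE : E ⊆ E') : KV C E c ⊆ KV C E' c := by
  intro d hd
  exact Relation.ReflTransGen.mono (r := adj C E) (p := adj C E')
    (fun a b hab => by obtain ⟨τ, hτ, h1, h2, h3⟩ := hab; exact ⟨τ, hE hτ, h1, h2, h3⟩) _ _ hd

lemma mem_KV_elim (h : d ∈ KV C E c) : d = c ∨ ∃ τ ∈ E, faceCell C τ d := by
  induction h with
  | refl => exact Or.inl rfl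
  | tail _ hadj _ =>
      obtain ⟨τ, hτ, _, hf, _⟩ := hadj
      exact Or.inr ⟨τ, hτ, hf⟩

lemma KV_cellData (h : d ∈ KV C E c)
    (hc : ∀ σ : Finset V, c = some σ → σ ∈ C.X ∧ σ.card = n + 1) :
    ∀ σ : Finset V, d = some σ → σ ∈ C.X ∧ σ.card = n + 1 := by
  intro σ hσ
  rcases mem_KV_elim h with h' | ⟨τ, _, hf⟩
  · exact hc σ (h' ▸ hσ ▸ rfl)
  · subst hσ
    exact ⟨hf.1, hf.2.1⟩

lemma isPath_edges {vs : List (Cell V)} {es : List (Finset V)}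
    (h : IsPath C E c c' vs es) : ∀ τ ∈ es, τ ∈ E := by
  induction h with
  | nil => simp
  | cons hτ _ _ _ _ ih =>
      intro τ' hτ'
      rcases List.mem_cons.1 hτ' with rfl | h'
      · exact hτ
      · exact ih τ' h'

lemma isPath_KV {vs : List (Cell V)} {es : List (Finset V)}
    (h : IsPath C E c c' vs es) (hE : ∀ τ ∈ es, τ ∈ E') : c' ∈ KV C E' c := by
  induction h with
  | nil => exact mem_KV_self
  | cons hτ hf1 hf2 hne _ ih =>
      exact Relation.ReflTransGen.head
        ⟨_, hE _ List.mem_cons_self, hf1, hf2, hne⟩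
        (ih fun τ' hτ' => hE τ' (List.mem_cons_of_mem _ hτ'))

lemma maxCell_unique {slt : Finset V → Finset V → Prop} {S : Set (Cell V)}
    {m m' : Cell V}
    (hirr : ∀ σ ∈ C.X, ¬ slt σ σ)
    (htr : ∀ σ ∈ C.X, ∀ σ' ∈ C.X, ∀ σ'' ∈ C.X, slt σ σ' → slt σ' σ'' → slt σ σ'')
    (hS : ∀ σ : Finset V, some σ ∈ S → σ ∈ C.X)
    (h1 : IsMaxCell slt S m) (h2 : IsMaxCell slt S m') : m = m' := by
  by_contra hne
  have ha : cslt slt m m' := h2.2 m h1.1 hne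
  have hb : cslt slt m' m := h1.2 m' h2.1 (Ne.symm hne)
  match m, m' with
  | none, _ => exact ha
  | some _, none => exact hb
  | some σ, some σ' =>
      have hσ : σ ∈ C.X := hS σ h1.1
      have hσ' : σ' ∈ C.X := hS σ' h2.1
      exact hirr σ hσ (htr σ hσ σ' hσ' σ hσ ha hb)

/-- Abstract uniqueness of the persistence pair with a given death cell. -/
lemma persPair_aux {slt : Finset V → Finset V → Prop} {τ τ' ω₀ : Finset V}
    (hirr : ∀ σ ∈ C.X, ¬ slt σ σ)
    (htr : ∀ σ ∈ C.X, ∀ σ' ∈ C.X, ∀ σ'' ∈ C.X, slt σ σ' → slt σ' σ'' → slt σ σ'')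
    (h : IsPersPair C slt τ ω₀) (h' : IsPersPair C slt τ' ω₀)
    (hlt : slt τ τ') : False := by
  obtain ⟨hτX, hτc, hωX, hωc, e₁, e₂, hne_e, hf1, hf2, hsep, m₂, hmax1, hmax2, hlt2⟩ := h
  obtain ⟨hτ'X, hτ'c, _, _, d₁, d₂, hne_d, hg1, hg2, hsep', m₂', hmax1', hmax2', hlt2'⟩ := h'
  have hsub : Egt C slt τ' ⊆ Egt C slt τ := by
    rintro σ ⟨hσX, hσc, hσlt⟩
    exact ⟨hσX, hσc, htr τ hτX τ' hτ'X σ hσX hlt hσlt⟩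
  have hτ'E : τ' ∈ Egt C slt τ := ⟨hτ'X, hτ'c, hlt⟩
  -- m₂' is in the component of ω₀ in G(≻ τ)
  have h1 : (some ω₀ : Cell V) ∈ KV C (Egt C slt τ) d₁ := KV_mono hsub hmax1'.1
  have h2 : d₂ ∈ KV C (Egt C slt τ) d₁ :=
    Relation.ReflTransGen.single ⟨τ', hτ'E, hg1, hg2, hne_d⟩
  have h3 : m₂' ∈ KV C (Egt C slt τ) d₂ := KV_mono hsub hmax2'.1
  have h4 : m₂' ∈ KV C (Egt C slt τ) (some ω₀) :=
    mem_KV_trans (mem_KV_trans (mem_KV_symm h1) h2) h3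
  have h5 : m₂' ∈ KV C (Egt C slt τ) e₁ := mem_KV_trans hmax1.1 h4
  by_cases hm : m₂' = some ω₀
  · subst hm
    exact hirr ω₀ hωX hlt2'
  · have hcs : cslt slt m₂' (some ω₀) := hmax1.2 m₂' h5 hm
    match m₂', hcs, hlt2' with
    | none, hcs, _ => exact hcs
    | some σ, hcs, hlt2' =>
        have hσX : σ ∈ C.X :=
          (KV_cellData hmax2'.1 (fun σ' hσ' => by subst hσ'; exact ⟨hg2.1, hg2.2.1⟩)
            σ rfl).1
        exact hirr ω₀ hωX (htr ω₀ hωX σ hσX ω₀ hωX hlt2' hcs)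

lemma persPair_right_unique {slt : Finset V → Finset V → Prop} {τ τ' ω₀ : Finset V}
    (hirr : ∀ σ ∈ C.X, ¬ slt σ σ)
    (htr : ∀ σ ∈ C.X, ∀ σ' ∈ C.X, ∀ σ'' ∈ C.X, slt σ σ' → slt σ' σ'' → slt σ σ'')
    (htot : ∀ σ ∈ C.X, ∀ σ' ∈ C.X, σ ≠ σ' → slt σ σ' ∨ slt σ' σ)
    (h : IsPersPair C slt τ ω₀) (h' : IsPersPair C slt τ' ω₀) : τ = τ' := by
  by_contra hne
  rcases htot τ h.1 τ' h'.1 hne with hlt | hlt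
  · exact persPair_aux hirr htr h h' hlt
  · exact persPair_aux hirr htr h' h hlt

end Aux

section Pert

variable {C : NComplex V n} {rlev : Finset V → ℝ} {rslt : Finset V → Finset V → Prop}
  {η : ℝ} {A : Set (Finset V)}

lemma pertLev_top {σ : Finset V} (hσ : σ ∈ C.X) (hc : σ.card = n + 1) :
    pertLev C rlev η A σ = rlev σ + η := if_pos (Or.inl ⟨hσ, hc⟩)

lemma pertLev_memA {σ : Finset V} (hσ : σ ∈ A) :
    pertLev C rlev η A σ = rlev σ + η := if_pos (Or.inr hσ)

lemma pertSlt_irrefl (hr : IsOWL C rlev rslt) :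
    ∀ σ ∈ C.X, ¬ pertSlt C rlev rslt η A σ σ := by
  rintro σ hσ (h | ⟨_, h⟩)
  · exact lt_irrefl _ h
  · exact hr.2.1 σ hσ h

lemma pertSlt_trans (hr : IsOWL C rlev rslt) :
    ∀ σ ∈ C.X, ∀ σ' ∈ C.X, ∀ σ'' ∈ C.X,
      pertSlt C rlev rslt η A σ σ' → pertSlt C rlev rslt η A σ' σ'' →
      pertSlt C rlev rslt η A σ σ'' := by
  rintro σ hσ σ' hσ' σ'' hσ'' (h1 | ⟨h1, hs1⟩) (h2 | ⟨h2, hs2⟩)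
  · exact Or.inl (h1.trans h2)
  · exact Or.inl (h2 ▸ h1)
  · exact Or.inl (h1 ▸ h2)
  · exact Or.inr ⟨h1.trans h2, hr.2.2.1 σ hσ σ' hσ' σ'' hσ'' hs1 hs2⟩

lemma pertSlt_total (hr : IsOWL C rlev rslt) :
    ∀ σ ∈ C.X, ∀ σ' ∈ C.X, σ ≠ σ' →
      pertSlt C rlev rslt η A σ σ' ∨ pertSlt C rlev rslt η A σ' σ := by
  intro σ hσ σ' hσ' hne
  rcases lt_trichotomy (pertLev C rlev η A σ) (pertLev C rlev η A σ') with h | h | h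
  · exact Or.inl (Or.inl h)
  · rcases hr.2.2.2.1 σ hσ σ' hσ' hne with hs | hs
    · exact Or.inl (Or.inr ⟨h, hs⟩)
    · exact Or.inr (Or.inr ⟨h.symm, hs⟩)
  · exact Or.inr (Or.inl h)

lemma pertSlt_top_iff (hr : IsOWL C rlev rslt) {σ σ' : Finset V}
    (hσ : σ ∈ C.X) (hc : σ.card = n + 1) (hσ' : σ' ∈ C.X) (hc' : σ'.card = n + 1) :
    pertSlt C rlev rslt η A σ σ' ↔ rslt σ σ' := by
  unfold pertSlt
  rw [pertLev_top hσ hc, pertLev_top hσ' hc']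
  constructor
  · rintro (h | ⟨_, hs⟩)
    · have hlt : rlev σ < rlev σ' := by linarith
      have hne : σ ≠ σ' := by rintro rfl; exact lt_irrefl _ hlt
      rcases hr.2.2.2.1 σ hσ σ' hσ' hne with h' | h'
      · exact h'
      · exact absurd (hr.2.2.2.2.1 σ' hσ' σ hσ h') (not_le.mpr hlt)
    · exact hs
  · intro h
    rcases lt_or_eq_of_le (hr.2.2.2.2.1 σ hσ σ' hσ' h) with h' | h'
    · exact Or.inl (by linarith)
    · exact Or.inr ⟨by rw [h'], h⟩

end Pert

/-- Fact 3.16: the persistence pair `(τ₀, ω₀)` is preserved under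
the perturbation `q(r, η, A)` with `A = (edges of P) ∪ {τ₀} ∪ (edges of the
component of ω₁ in G(≻_r τ₀))`. -/
theorem persistence_pair_preserved_under_perturbation
    (hn : 2 ≤ n) (C : NComplex V n) (htwo : TwoCofaces C) (hconn : DualConn C)
    (rlev : Finset V → ℝ) (rslt : Finset V → Finset V → Prop)
    (hr : IsOWL C rlev rslt)
    (τ₀ ω₀ : Finset V) (hpair : IsPersPair C rslt τ₀ ω₀)
    (ωe ωe' : Cell V) (hfe : faceCell C τ₀ ωe) (hfe' : faceCell C τ₀ ωe')
    (hee : ωe ≠ ωe') (hin : ωe ∈ KV C (Egt C rslt τ₀) (some ω₀))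
    (ω₁ : Cell V) (hω₁ : IsMaxCell rslt (KV C (Egt C rslt τ₀) ωe') ω₁)
    (vs : List (Cell V)) (es : List (Finset V))
    (hP : IsPath C (Egt C rslt τ₀) (some ω₀) ωe vs es) (hnd : vs.Nodup)
    (η : ℝ) (hη : 0 < η) :
    ∀ A : Set (Finset V),
      A = {τ | τ ∈ es} ∪ {τ₀} ∪ compEdges C (Egt C rslt τ₀) ω₁ →
      IsPersPair C (pertSlt C rlev rslt η A) τ₀ ω₀ ∧
      ∀ τ : Finset V, IsPersPair C (pertSlt C rlev rslt η A) τ ω₀ → τ = τ₀ := by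
  intro A hA
  obtain ⟨hτ₀X, hτ₀c, hω₀X, hω₀c, c₁, c₂, hc12, hf1, hf2, hsep, m₂, hmax1, hmax2, hltm⟩ :=
    hpair
  set Er := Egt C rslt τ₀ with hEr
  set q := pertSlt C rlev rslt η A with hq
  set Eq' := Egt C q τ₀ with hEq'
  -- τ₀ ∈ A
  have hτ₀A : τ₀ ∈ A := by
    rw [hA]; exact Or.inl (Or.inr rfl)
  -- every element of A other than τ₀ lies in Er
  have hAEr : ∀ τ ∈ A, τ ≠ τ₀ → τ ∈ Er := by
    intro τ hτ hne
    rw [hA] at hτ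
    rcases hτ with (hτ | hτ) | hτ
    · exact isPath_edges hP τ hτ
    · exact absurd (Set.mem_singleton_iff.1 hτ) hne
    · exact hτ.1
  -- elements of A that are in Er are in Eq'
  have hAq : ∀ τ ∈ A, τ ∈ Er → τ ∈ Eq' := by
    rintro τ hτ ⟨hτX, hτc, hτlt⟩
    refine ⟨hτX, hτc, ?_⟩
    rw [hq]
    unfold pertSlt
    rw [pertLev_memA hτ₀A, pertLev_memA hτ]
    have hle : rlev τ₀ ≤ rlev τ := hr.2.2.2.2.1 τ₀ hτ₀X τ hτX hτlt
    rcases lt_or_eq_of_le hle with h | h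
    · exact Or.inl (by linarith)
    · exact Or.inr ⟨by rw [h], hτlt⟩
  -- Eq' ⊆ Er
  have hEqEr : Eq' ⊆ Er := by
    rintro τ ⟨hτX, hτc, hτq⟩
    refine ⟨hτX, hτc, ?_⟩
    have hne : τ ≠ τ₀ := by
      rintro rfl
      exact pertSlt_irrefl hr τ hτX hτq
    by_cases hτA : τ ∈ A
    · exact (hAEr τ hτA hne).2.2
    · have hlevτ : pertLev C rlev η A τ = rlev τ - η := by
        apply if_neg
        rintro (⟨_, hcc⟩ | hcc)
        · omega
        · exact hτA hcc
      rcases hτq with h | ⟨_, hs⟩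
      · rw [pertLev_memA hτ₀A, hlevτ] at h
        have hlt : rlev τ₀ < rlev τ := by linarith
        rcases hr.2.2.2.1 τ₀ hτ₀X τ hτX (Ne.symm hne) with h' | h'
        · exact h'
        · exact absurd (hr.2.2.2.2.1 τ hτX τ₀ hτ₀X h') (not_le.mpr hlt)
      · exact hs
  -- components of ω₁ agree
  have hcomp : ∀ d, d ∈ KV C Er ω₁ → d ∈ KV C Eq' ω₁ := by
    intro d hd
    induction hd with
    | refl => exact mem_KV_self
    | @tail b d hb hadj ih =>
        obtain ⟨τ, hτE, hfb, hfd, hbd⟩ := hadj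
        have hτA : τ ∈ A := by
          rw [hA]; exact Or.inr ⟨hτE, b, hfb, hb⟩
        exact Relation.ReflTransGen.tail ih ⟨τ, hAq τ hτA hτE, hfb, hfd, hbd⟩
  -- identify ωe = c₁, ωe' = c₂
  obtain ⟨d₁, d₂, hdne, hdall⟩ := htwo τ₀ hτ₀X hτ₀c
  have hpairs : ∀ c : Cell V, faceCell C τ₀ c → c = c₁ ∨ c = c₂ := by
    intro c hc
    have h0 := (hdall c).1 hc
    have h1 := (hdall c₁).1 hf1
    have h2 := (hdall c₂).1 hf2
    rcases h1 with h1 | h1 <;> rcases h2 with h2 | h2 <;>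
      rcases h0 with h0 | h0 <;>
      first
        | exact absurd (h1.trans h2.symm) hc12
        | exact Or.inl (h0.trans h1.symm)
        | exact Or.inr (h0.trans h2.symm)
  have hω₀c₁ : (some ω₀ : Cell V) ∈ KV C Er c₁ := hmax1.1
  have hKVeq : KV C Er (some ω₀) = KV C Er c₁ := KV_eq_of_mem hω₀c₁
  have hωe_in : ωe ∈ KV C Er c₁ := hKVeq ▸ hin
  have hωe_eq : ωe = c₁ := by
    rcases hpairs ωe hfe with h | h
    · exact h
    · exact absurd (h ▸ hωe_in) hsep
  have hωe'_eq : ωe' = c₂ := by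
    rcases hpairs ωe' hfe' with h | h
    · exact absurd (h.trans hωe_eq.symm) (Ne.symm hee)
    · exact h
  -- cell data along components
  have hdata_e : ∀ c, c ∈ KV C Eq' ωe → ∀ σ : Finset V, c = some σ →
      σ ∈ C.X ∧ σ.card = n + 1 := by
    intro c hc
    exact KV_cellData hc (fun σ hσ => by subst hσ; exact ⟨hfe.1, hfe.2.1⟩)
  have hdata_e' : ∀ c, c ∈ KV C Er ωe' → ∀ σ : Finset V, c = some σ →
      σ ∈ C.X ∧ σ.card = n + 1 := by
    intro c hc
    exact KV_cellData hc (fun σ hσ => by subst hσ; exact ⟨hfe'.1, hfe'.2.1⟩)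
  -- m₂ = ω₁
  have hmax2' : IsMaxCell rslt (KV C Er ωe') m₂ := by rw [hωe'_eq]; exact hmax2
  have hm₂ω₁ : m₂ = ω₁ := by
    refine maxCell_unique hr.2.1 hr.2.2.1 ?_ hmax2' hω₁
    intro σ hσ
    exact (hdata_e' _ hσ σ rfl).1
  -- ω₀ is in the q-component of ωe
  have hesq : ∀ τ ∈ es, τ ∈ Eq' := by
    intro τ hτ
    have hτA : τ ∈ A := by rw [hA]; exact Or.inl (Or.inl hτ)
    exact hAq τ hτA (isPath_edges hP τ hτ)
  have hωe_q : ωe ∈ KV C Eq' (some ω₀) := isPath_KV hP hesq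
  have hω₀_q : (some ω₀ : Cell V) ∈ KV C Eq' ωe := mem_KV_symm hωe_q
  -- ω₁ is in the q-component of ωe'
  have hω₁_q : ω₁ ∈ KV C Eq' ωe' := by
    have h1 : ω₁ ∈ KV C Er ωe' := hω₁.1
    have h2 : ωe' ∈ KV C Er ω₁ := mem_KV_symm h1
    exact mem_KV_symm (hcomp ωe' h2)
  -- the first persistence pair statement
  have hmain : IsPersPair C q τ₀ ω₀ := by
    refine ⟨hτ₀X, hτ₀c, hω₀X, hω₀c, ωe, ωe', hee, hfe, hfe', ?_, ω₁, ?_, ?_, ?_⟩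
    · intro h
      have h' : ωe' ∈ KV C Er ωe := KV_mono hEqEr h
      rw [hωe_eq, hωe'_eq] at h'
      exact hsep h'
    · refine ⟨hω₀_q, ?_⟩
      intro c hc hne
      have hcr : c ∈ KV C Er c₁ := by
        have := KV_mono hEqEr hc
        rwa [hωe_eq] at this
      have hcs : cslt rslt c (some ω₀) := hmax1.2 c hcr hne
      match c, hcs, hc with
      | none, hcs, _ => exact hcs.elim
      | some σ, hcs, hc =>
          have hσ := hdata_e _ hc σ rfl
          exact (pertSlt_top_iff hr hσ.1 hσ.2 hω₀X hω₀c).2 hcs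
    · refine ⟨hω₁_q, ?_⟩
      intro c hc hne
      have hcr : c ∈ KV C Er ωe' := KV_mono hEqEr hc
      have hcs : cslt rslt c ω₁ := hω₁.2 c hcr hne
      match ω₁, c, hcs, hne, hcr with
      | none, none, _, hne, _ => exact absurd rfl hne
      | none, some _, _, _, _ => exact trivial
      | some σ₁, none, hcs, _, _ => exact hcs.elim
      | some σ₁, some σ, hcs, _, hcr =>
          have hσ := hdata_e' _ hcr σ rfl
          have hσ₁ := hdata_e' _ hω₁.1 σ₁ rfl
          exact (pertSlt_top_iff hr hσ.1 hσ.2 hσ₁.1 hσ₁.2).2 hcs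
    · have hltm' : cslt rslt (some ω₀) ω₁ := hm₂ω₁ ▸ hltm
      match ω₁, hltm' with
      | none, _ => exact trivial
      | some σ₁, hltm' =>
          have hσ₁ := hdata_e' _ hω₁.1 σ₁ rfl
          exact (pertSlt_top_iff hr hω₀X hω₀c hσ₁.1 hσ₁.2).2 hltm'
  refine ⟨hmain, ?_⟩
  intro τ hτ
  exact persPair_right_unique (pertSlt_irrefl hr) (pertSlt_trans hr)
    (pertSlt_total hr) hτ hmain

end StableVol
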